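/- Direct competition reduction effect: let (i₀,j₀) be an arc of Γ with δ⁻(j₀) ≥ 2, and let i_k ≠ i₀ be another immediate predecessor of j₀ that is not a predecessor in Γ of any immediate predecessor of j₀. If v is superadditive, then AF_{i_k}(N,v,Γ) ≤ AF_{i_k}(N,v,Γ−(i₀,j₀)). -/

import Mathlib

open scoped Classical
open Finset

section Preamble

variable {V : Type*} [Fintype V] [DecidableEq V]

/-- Adjacency relation of a digraph given by its arc set. -/
def Adj (A : Finset (V × V)) (i j : V) : Prop := (i, j) ∈ A

/-- A digraph is circuit-free if it contains no directed cycle. -/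
def CircuitFree (A : Finset (V × V)) : Prop :=
  ∀ i : V, ¬ Relation.TransGen (Adj A) i i

/-- In-degree of a node. -/
def inDeg (A : Finset (V × V)) (j : V) : ℕ :=
  (A.filter (fun a => a.2 = j)).card

/-- Weak connectivity (chains, ignoring orientation). -/
def WConn (A : Finset (V × V)) (i j : V) : Prop :=
  Relation.ReflTransGen (fun a b => (a, b) ∈ A ∨ (b, a) ∈ A) i j

/-- The weakly connected component of `i`, as a finset. -/
noncomputable def compF (A : Finset (V × V)) (i : V) : Finset V :=
  Finset.univ.filter (fun j => WConn A i j)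

/-- `IsPath A p` : `p` is a (nonempty) directed path along arcs of `A`. -/
def IsPath (A : Finset (V × V)) : List V → Prop
  | [] => False
  | [_] => True
  | i :: j :: l => (i, j) ∈ A ∧ IsPath A (j :: l)

/-- The digraph `A` restricted to the node set `K` is an arborescence:
there is a root `r ∈ K` with a unique directed path from `r` to every node of `K`. -/
def IsArbOn (A : Finset (V × V)) (K : Set V) : Prop :=
  ∃ r ∈ K, ∀ i ∈ K, ∃! p : List V,
    IsPath A p ∧ p.head? = some r ∧ p.getLast? = some i

/-- A forest: every weakly connected component is an arborescence. -/
def IsForest (A : Finset (V × V)) : Prop :=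
  ∀ i : V, IsArbOn A {j | WConn A i j}

/-- `F` is a maximal spanning forest of the digraph `A`. -/
def IsMaxSpanningForest (A F : Finset (V × V)) : Prop :=
  F ⊆ A ∧ IsForest F ∧ ∀ a ∈ A, a ∉ F → ¬ IsForest (insert a F)

/-- The collection of all maximal spanning forests of `A`. -/
noncomputable def maxForests (A : Finset (V × V)) : Finset (Finset (V × V)) :=
  A.powerset.filter (fun F => IsMaxSpanningForest A F)

/-- `S̄_F(i)` : the node `i` together with all its successors in `F`. -/
noncomputable def succSet (F : Finset (V × V)) (i : V) : Finset V :=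
  Finset.univ.filter (fun j => Relation.ReflTransGen (Adj F) i j)

/-- `Ŝ_F(i)` : the immediate successors of `i` in `F`. -/
noncomputable def immSucc (F : Finset (V × V)) (i : V) : Finset V :=
  Finset.univ.filter (fun j => (i, j) ∈ F)

/-- Marginal contribution of player `i` with respect to the forest `F`. -/
noncomputable def marg (v : Finset V → ℝ) (F : Finset (V × V)) (i : V) : ℝ :=
  v (succSet F i) - ∑ j ∈ immSucc F i, v (succSet F j)

/-- The Average Forest leadership measure. -/
noncomputable def AF (v : Finset V → ℝ) (A : Finset (V × V)) (i : V) : ℝ :=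
  (∑ F ∈ maxForests A, marg v F i) / (maxForests A).card

/-- The node sets of the arborescence components of a forest `F`. -/
noncomputable def comps (F : Finset (V × V)) : Finset (Finset V) :=
  Finset.univ.image (fun i => compF F i)

/-- Productivity of the organisational situation. -/
noncomputable def Productivity (v : Finset V → ℝ) (A : Finset (V × V)) : ℝ :=
  (∑ F ∈ maxForests A, ∑ K ∈ comps F, v K) / (maxForests A).card

/-- Superadditivity of a TU game. -/
def Superadditive (v : Finset V → ℝ) : Prop :=
  ∀ S Q : Finset V, Disjoint S Q → v S + v Q ≤ v (S ∪ Q)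

/-- Weak connectedness of the digraph. -/
def WeaklyConnected (A : Finset (V × V)) : Prop :=
  ∀ i j : V, WConn A i j

/-- Quasi-strong connectedness: existence of a root reaching every node. -/
def HasRoot (A : Finset (V × V)) : Prop :=
  ∃ r : V, ∀ i : V, Relation.ReflTransGen (Adj A) r i

end Preamble

section AFProofAux

variable {V : Type*} [Fintype V] [DecidableEq V]

private lemma isPath_iff_chain' (F : Finset (V × V)) (p : List V) :
    IsPath F p ↔ p ≠ [] ∧ p.Chain' (fun a b => (a, b) ∈ F) := by
  induction p with
  | nil => simp [IsPath]
  | cons a q ih =>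
    cases q with
    | nil => simp [IsPath, List.Chain']
    | cons c r =>
      simp only [IsPath, ih]
      constructor
      · rintro ⟨h1, h2⟩
        exact ⟨by simp, List.isChain_cons_cons.2 ⟨h1, h2.2⟩⟩
      · rintro ⟨-, h⟩
        simp only [List.Chain', List.isChain_cons_cons] at h
        exact ⟨h.1, by simp, h.2⟩

private lemma wf_of_circuitFree {A F : Finset (V × V)} (hA : CircuitFree A) (hFA : F ⊆ A) :
    WellFounded (fun a b : V => (a, b) ∈ F) := by
  have h1 : IsIrrefl V (Relation.TransGen (Adj A)) := ⟨hA⟩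
  have h2 := Finite.wellFounded_of_trans_of_irrefl (Relation.TransGen (Adj A))
  exact Subrelation.wf (r := Relation.TransGen (Adj A))
    (fun {a b} h => Relation.TransGen.single (hFA h)) h2

/-- ancestor chain ending at `j`. -/
private noncomputable def chainTo {F : Finset (V × V)}
    (hwf : WellFounded (fun a b : V => (a, b) ∈ F)) : V → List V :=
  hwf.fix (fun j ih => if h : ∃ a, (a, j) ∈ F then ih h.choose h.choose_spec ++ [j] else [j])

private lemma chainTo_eq {F : Finset (V × V)}
    (hwf : WellFounded (fun a b : V => (a, b) ∈ F)) (j : V) :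
    chainTo hwf j =
      if h : ∃ a, (a, j) ∈ F then chainTo hwf h.choose ++ [j] else [j] := by
  rw [chainTo, WellFounded.fix_eq]

/-- root of the tree containing `j`. -/
private noncomputable def rootT {F : Finset (V × V)}
    (hwf : WellFounded (fun a b : V => (a, b) ∈ F)) : V → V :=
  hwf.fix (fun j ih => if h : ∃ a, (a, j) ∈ F then ih h.choose h.choose_spec else j)

private lemma rootT_eq {F : Finset (V × V)}
    (hwf : WellFounded (fun a b : V => (a, b) ∈ F)) (j : V) :
    rootT hwf j = if h : ∃ a, (a, j) ∈ F then rootT hwf h.choose else j := by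
  rw [rootT, WellFounded.fix_eq]

private lemma chainTo_ne_nil {F : Finset (V × V)}
    (hwf : WellFounded (fun a b : V => (a, b) ∈ F)) (j : V) :
    chainTo hwf j ≠ [] := by
  rw [chainTo_eq]; split <;> simp

private lemma chainTo_getLast? {F : Finset (V × V)}
    (hwf : WellFounded (fun a b : V => (a, b) ∈ F)) (j : V) :
    (chainTo hwf j).getLast? = some j := by
  rw [chainTo_eq]; split
  · rw [List.getLast?_append_of_ne_nil _ (by simp)]; rfl
  · rfl

private lemma chainTo_head? {F : Finset (V × V)}
    (hwf : WellFounded (fun a b : V => (a, b) ∈ F)) (j : V) :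
    (chainTo hwf j).head? = some (rootT hwf j) := by
  induction j using hwf.induction with
  | _ j ih =>
    rw [chainTo_eq, rootT_eq]
    split
    · next h =>
      rw [List.head?_append_of_ne_nil _ (chainTo_ne_nil hwf _)]
      exact ih _ h.choose_spec
    · rfl

private lemma reach_rootT {F : Finset (V × V)}
    (hwf : WellFounded (fun a b : V => (a, b) ∈ F)) (j : V) :
    Relation.ReflTransGen (Adj F) (rootT hwf j) j := by
  induction j using hwf.induction with
  | _ j ih =>
    rw [rootT_eq]
    split
    · next h => exact (ih _ h.choose_spec).tail h.choose_spec
    · exact .refl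

private lemma rootT_parent {F : Finset (V × V)}
    (hwf : WellFounded (fun a b : V => (a, b) ∈ F))
    (huniq : ∀ ⦃j a b : V⦄, (a, j) ∈ F → (b, j) ∈ F → a = b)
    {a j : V} (h : (a, j) ∈ F) : rootT hwf j = rootT hwf a := by
  rw [rootT_eq]
  have hex : ∃ x, (x, j) ∈ F := ⟨a, h⟩
  rw [dif_pos hex, huniq hex.choose_spec h]

private lemma chainTo_isPath {A F : Finset (V × V)}
    (hwf : WellFounded (fun a b : V => (a, b) ∈ F)) (j : V) :
    IsPath F (chainTo hwf j) := by
  induction j using hwf.induction with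
  | _ j ih =>
    rw [isPath_iff_chain', chainTo_eq]
    split
    · next h =>
      have hp := ih _ h.choose_spec
      rw [isPath_iff_chain'] at hp
      refine ⟨by simp, List.isChain_append.2 ⟨hp.2, List.isChain_singleton _, ?_⟩⟩
      intro x hx y hy
      rw [chainTo_getLast? hwf] at hx
      simp only [List.head?_cons, Option.mem_def, Option.some.injEq] at hx hy
      subst hx; subst hy
      exact h.choose_spec
    · exact ⟨by simp, List.isChain_singleton _⟩

private lemma rootT_no_fix {A F : Finset (V × V)} (hA : CircuitFree A) (hFA : F ⊆ A)
    (hwf : WellFounded (fun a b : V => (a, b) ∈ F))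
    {a j : V} (haj : (a, j) ∈ F) (hroot : rootT hwf j = j) : False := by
  have hex : ∃ x, (x, j) ∈ F := ⟨a, haj⟩
  rw [rootT_eq, dif_pos hex] at hroot
  have h1 := reach_rootT hwf hex.choose
  rw [hroot] at h1
  have h2 : Relation.ReflTransGen (Adj A) j hex.choose :=
    Relation.ReflTransGen.mono (fun x y hxy => hFA hxy) _ _ h1
  exact hA j (Relation.TransGen.tail' h2 (hFA hex.choose_spec))

private lemma path_unique {A F : Finset (V × V)} (hA : CircuitFree A) (hFA : F ⊆ A)
    (huniq : ∀ ⦃j a b : V⦄, (a, j) ∈ F → (b, j) ∈ F → a = b)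
    (hwf : WellFounded (fun a b : V => (a, b) ∈ F)) :
    ∀ (j : V) (p : List V), IsPath F p → p.head? = some (rootT hwf j) →
      p.getLast? = some j → p = chainTo hwf j := by
  intro j
  induction j using hwf.induction with
  | _ j ih =>
    intro p hp hh hl
    rcases List.eq_nil_or_concat' p with rfl | ⟨q, x, rfl⟩
    · rw [isPath_iff_chain'] at hp; exact absurd rfl hp.1
    obtain rfl : j = x := by
      rw [List.getLast?_append_of_ne_nil _ (by simp)] at hl
      simpa using hl.symm
    rcases eq_or_ne q [] with rfl | hq
    · -- p = [j] : the root equals j, so j has no parent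
      simp only [List.nil_append, List.head?_cons, Option.some.injEq] at hh
      rw [chainTo_eq]
      split
      · next h => exact absurd hh (fun he => rootT_no_fix hA hFA hwf h.choose_spec he.symm)
      · rfl
    · -- p = q ++ [j] with q ≠ []
      rw [isPath_iff_chain'] at hp
      obtain ⟨-, hch⟩ := hp
      simp only [List.Chain', List.isChain_append] at hch
      obtain ⟨hq1, -, hq2⟩ := hch
      have hlast : q.getLast? = some (q.getLast hq) := List.getLast?_eq_getLast hq
      have harc : (q.getLast hq, j) ∈ F := hq2 _ hlast _ rfl
      have hex : ∃ a, (a, j) ∈ F := ⟨_, harc⟩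
      have hc : hex.choose = q.getLast hq := huniq hex.choose_spec harc
      have hqpath : IsPath F q := (isPath_iff_chain' F q).2 ⟨hq, hq1⟩
      have hqh : q.head? = some (rootT hwf (q.getLast hq)) := by
        rw [List.head?_append_of_ne_nil _ hq] at hh
        have hre : rootT hwf j = rootT hwf (q.getLast hq) := by
          rw [rootT_eq, dif_pos hex, hc]
        rw [hh, hre]
      have := ih (q.getLast hq) (hc ▸ hex.choose_spec) q hqpath hqh hlast
      rw [chainTo_eq, dif_pos hex, hc]
      exact congrArg (fun l => l ++ [j]) this

private lemma wconn_symm {F : Finset (V × V)} {i j : V} (h : WConn F i j) : WConn F j i :=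
  by
  haveI : Std.Symm (fun a b : V => (a, b) ∈ F ∨ (b, a) ∈ F) := ⟨fun _ _ h => h.symm⟩
  exact Relation.ReflTransGen.symmetric.symm _ _ h

private lemma wconn_rootT {F : Finset (V × V)}
    (huniq : ∀ ⦃j a b : V⦄, (a, j) ∈ F → (b, j) ∈ F → a = b)
    (hwf : WellFounded (fun a b : V => (a, b) ∈ F))
    {i j : V} (h : WConn F i j) : rootT hwf i = rootT hwf j := by
  induction h with
  | refl => rfl
  | tail _ hbc ih =>
    rcases hbc with h1 | h1
    · rw [ih, rootT_parent hwf huniq h1]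
    · rw [ih, ← rootT_parent hwf huniq h1]

private lemma isForest_of_unique_parent {A F : Finset (V × V)}
    (hA : CircuitFree A) (hFA : F ⊆ A)
    (huniq : ∀ ⦃j a b : V⦄, (a, j) ∈ F → (b, j) ∈ F → a = b) : IsForest F := by
  have hwf := wf_of_circuitFree hA hFA
  intro i
  refine ⟨rootT hwf i, ?_, ?_⟩
  · exact wconn_symm (Relation.ReflTransGen.mono (fun x y h => Or.inl h) _ _ (reach_rootT hwf i))
  · intro j hj
    have hroot : rootT hwf j = rootT hwf i := (wconn_rootT huniq hwf hj).symm
    refine ⟨chainTo hwf j, ⟨chainTo_isPath (A := A) hwf j, ?_, chainTo_getLast? hwf j⟩, ?_⟩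
    · rw [chainTo_head? hwf, hroot]
    · rintro p ⟨hp, hph, hpl⟩
      exact path_unique hA hFA huniq hwf j p hp (by rw [hph, hroot]) hpl

private lemma unique_parent_of_isForest {F : Finset (V × V)} (hF : IsForest F)
    {a b j : V} (haj : (a, j) ∈ F) (hbj : (b, j) ∈ F) : a = b := by
  obtain ⟨r, hr, hu⟩ := hF j
  obtain ⟨p, ⟨hp, hph, hpl⟩, -⟩ := hu a (Relation.ReflTransGen.single (Or.inr haj))
  obtain ⟨q, ⟨hq, hqh, hql⟩, -⟩ := hu b (Relation.ReflTransGen.single (Or.inr hbj))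
  have hpn : p ≠ [] := by rw [isPath_iff_chain'] at hp; exact hp.1
  have hqn : q ≠ [] := by rw [isPath_iff_chain'] at hq; exact hq.1
  have hpath : ∀ (l : List V) (c : V), l ≠ [] → IsPath F l → l.getLast? = some c →
      (c, j) ∈ F → IsPath F (l ++ [j]) := by
    intro l c hl hpl' hlast harc
    rw [isPath_iff_chain'] at hpl' ⊢
    refine ⟨by simp, List.isChain_append.2 ⟨hpl'.2, List.isChain_singleton _, ?_⟩⟩
    intro x hx y hy
    simp only [Option.mem_def, List.head?_cons, Option.some.injEq] at hx hy
    rw [hlast] at hx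
    simp only [Option.some.injEq] at hx
    subst hx; subst hy; exact harc
  have h1 : p ++ [j] = q ++ [j] := by
    have hj' : WConn F j j := Relation.ReflTransGen.refl
    obtain ⟨w, -, hwu⟩ := hu j hj'
    have e1 := hwu (p ++ [j]) ⟨hpath p a hpn hp hpl haj,
      by rw [List.head?_append_of_ne_nil _ hpn]; exact hph,
      by rw [List.getLast?_append_of_ne_nil _ (by simp)]; rfl⟩
    have e2 := hwu (q ++ [j]) ⟨hpath q b hqn hq hql hbj,
      by rw [List.head?_append_of_ne_nil _ hqn]; exact hqh,
      by rw [List.getLast?_append_of_ne_nil _ (by simp)]; rfl⟩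
    rw [e1, e2]
  have h2 : p = q := List.append_cancel_right h1
  rw [h2, hql] at hpl
  exact (Option.some.inj hpl).symm

end AFProofAux

section AFProofAux2

variable {V : Type*} [Fintype V] [DecidableEq V]

private lemma mem_maxForests_iff {A : Finset (V × V)} (hA : CircuitFree A)
    {F : Finset (V × V)} :
    F ∈ maxForests A ↔ F ⊆ A ∧ (∀ ⦃j a b : V⦄, (a, j) ∈ F → (b, j) ∈ F → a = b) ∧
      (∀ ⦃i j : V⦄, (i, j) ∈ A → ∃ b, (b, j) ∈ F) := by
  rw [maxForests, mem_filter, mem_powerset]; simp only [IsMaxSpanningForest]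
  constructor
  · rintro ⟨hFA, -, hforest, hmax⟩
    refine ⟨hFA, fun j a b haj hbj => unique_parent_of_isForest hforest haj hbj, ?_⟩
    intro i j hij
    by_contra hno
    push_neg at hno
    have hnotF : (i, j) ∉ F := hno i
    refine hmax (i, j) hij hnotF (isForest_of_unique_parent hA ?_ ?_)
    · exact insert_subset hij hFA
    · rintro j' a b ha hb
      rcases mem_insert.1 ha with ha1 | ha2 <;> rcases mem_insert.1 hb with hb1 | hb2
      · simp only [Prod.mk.injEq] at ha1 hb1
        rw [ha1.1, hb1.1]
      · simp only [Prod.mk.injEq] at ha1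
        exact absurd (ha1.2 ▸ hb2) (hno b)
      · simp only [Prod.mk.injEq] at hb1
        exact absurd (hb1.2 ▸ ha2) (hno a)
      · exact unique_parent_of_isForest hforest ha2 hb2
  · rintro ⟨hFA, huniq, hcov⟩
    refine ⟨hFA, hFA, isForest_of_unique_parent hA hFA huniq, ?_⟩
    rintro ⟨x, y⟩ hxy hnotF hforest'
    obtain ⟨b, hb⟩ := hcov hxy
    have : x = b := unique_parent_of_isForest hforest' (mem_insert_self _ _)
      (mem_insert_of_mem hb)
    exact hnotF (this ▸ hb)

private lemma reflTransGen_insert {G : Finset (V × V)} {a : V × V} {s x : V}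
    (h : ¬ Relation.ReflTransGen (Adj G) s a.1)
    (hx : Relation.ReflTransGen (Adj (insert a G)) s x) :
    Relation.ReflTransGen (Adj G) s x := by
  induction hx with
  | refl => exact .refl
  | tail hsy hyx ih =>
    rcases mem_insert.1 hyx with h1 | h2
    · exact absurd (by rw [← Prod.mk.eta (p := a), Prod.ext_iff] at h1; exact h1.1 ▸ ih) h
    · exact ih.tail h2

private lemma succSet_insert {G : Finset (V × V)} {a : V × V} {s : V}
    (h : ¬ Relation.ReflTransGen (Adj G) s a.1) :
    succSet (insert a G) s = succSet G s := by
  ext x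
  simp only [succSet, mem_filter, mem_univ, true_and]
  exact ⟨fun hx => reflTransGen_insert h hx,
    fun hx => Relation.ReflTransGen.mono (fun p q hpq => mem_insert_of_mem hpq) _ _ hx⟩

private lemma ancestors_comparable {G : Finset (V × V)}
    (huniq : ∀ ⦃j a b : V⦄, (a, j) ∈ G → (b, j) ∈ G → a = b) {b x : V}
    (hb : Relation.ReflTransGen (Adj G) b x) :
    ∀ ⦃a : V⦄, Relation.ReflTransGen (Adj G) a x →
      Relation.ReflTransGen (Adj G) a b ∨ Relation.ReflTransGen (Adj G) b a := by
  induction hb with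
  | refl => intro a ha; exact Or.inl ha
  | @tail y x' hby hyx ih =>
    intro a ha
    rcases ha.cases_tail with rfl | ⟨z, haz, hzx⟩
    · exact Or.inr (hby.tail hyx)
    · have hzy : z = y := huniq hzx hyx
      exact ih (hzy ▸ haz)

end AFProofAux2

section AFProofAux3

variable {V : Type*} [Fintype V] [DecidableEq V]

private def IsBody (A : Finset (V × V)) (j₀ : V) (G : Finset (V × V)) : Prop :=
  G ⊆ A ∧ (∀ a ∈ G, (a : V × V).2 ≠ j₀) ∧
    (∀ ⦃j a b : V⦄, (a, j) ∈ G → (b, j) ∈ G → a = b) ∧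
    (∀ ⦃i j : V⦄, (i, j) ∈ A → j ≠ j₀ → ∃ b, (b, j) ∈ G)

private noncomputable def bodies (A : Finset (V × V)) (j₀ : V) : Finset (Finset (V × V)) :=
  A.powerset.filter (IsBody A j₀)

private lemma mem_bodies_iff {A G : Finset (V × V)} {j₀ : V} :
    G ∈ bodies A j₀ ↔ IsBody A j₀ G := by
  simp only [bodies, mem_filter, mem_powerset]
  exact ⟨fun h => h.2, fun h => ⟨h.1, h⟩⟩

private lemma bodies_erase {A : Finset (V × V)} {i₀ j₀ : V} :
    bodies (A.erase (i₀, j₀)) j₀ = bodies A j₀ := by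
  ext G
  simp only [mem_bodies_iff, IsBody]
  constructor
  · rintro ⟨h1, h2, h3, h4⟩
    refine ⟨h1.trans (erase_subset _ _), h2, h3, ?_⟩
    intro i j hij hj
    exact h4 (mem_erase.2 ⟨fun he => hj (congrArg Prod.snd he), hij⟩) hj
  · rintro ⟨h1, h2, h3, h4⟩
    refine ⟨fun a haG => mem_erase.2 ⟨fun he => h2 a haG (congrArg Prod.snd he), h1 haG⟩,
      h2, h3, ?_⟩
    intro i j hij hj
    exact h4 (erase_subset _ _ hij) hj

private lemma bodies_nonempty (A : Finset (V × V)) (j₀ : V) : (bodies A j₀).Nonempty := by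
  classical
  set pick : V → V := fun j => if h : ∃ i, (i, j) ∈ A then h.choose else j with hpick
  set S : Finset V := univ.filter (fun j : V => j ≠ j₀ ∧ ∃ i, (i, j) ∈ A) with hS
  refine ⟨S.image (fun j => (pick j, j)), ?_⟩
  rw [mem_bodies_iff]
  have hmem : ∀ p : V × V, p ∈ S.image (fun j => (pick j, j)) ↔
      p.2 ∈ S ∧ p.1 = pick p.2 := by
    intro p
    simp only [mem_image]
    constructor
    · rintro ⟨j, hj, he⟩
      rw [← he]; exact ⟨hj, rfl⟩
    · rintro ⟨h1, h2⟩
      exact ⟨p.2, h1, by rw [← h2]⟩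
  refine ⟨?_, ?_, ?_, ?_⟩
  · intro p hp
    rw [hmem] at hp
    obtain ⟨h1, h2⟩ := hp
    simp only [hS, mem_filter, mem_univ, true_and] at h1
    obtain ⟨-, hex⟩ := h1
    have hpe : pick p.2 = hex.choose := by rw [hpick]; exact dif_pos hex
    have hp2 : p = (hex.choose, p.2) := by
      rw [Prod.ext_iff]; exact ⟨by rw [h2, hpe], rfl⟩
    rw [hp2]
    exact hex.choose_spec
  · intro a ha
    rw [hmem] at ha
    simp only [hS, mem_filter, mem_univ, true_and] at ha
    exact ha.1.1
  · intro j a b haj hbj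
    rw [hmem] at haj hbj
    exact haj.2.trans hbj.2.symm
  · intro i j hij hj
    refine ⟨pick j, ?_⟩
    rw [hmem]
    refine ⟨?_, rfl⟩
    simp only [hS, mem_filter, mem_univ, true_and]
    exact ⟨hj, i, hij⟩

private lemma maxForests_eq_image {A : Finset (V × V)} (hA : CircuitFree A) {j₀ : V}
    (hj0 : ∃ i, (i, j₀) ∈ A) :
    maxForests A =
      ((univ.filter (fun i => (i, j₀) ∈ A)) ×ˢ bodies A j₀).image
        (fun q => insert (q.1, j₀) q.2) := by
  ext F
  rw [mem_maxForests_iff hA]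
  simp only [mem_image, mem_product, mem_filter, mem_univ, true_and, mem_bodies_iff,
    Prod.exists]
  constructor
  · rintro ⟨hFA, huniq, hcov⟩
    obtain ⟨i1, hi1⟩ := hj0
    obtain ⟨b, hb⟩ := hcov hi1
    refine ⟨b, F.filter (fun a => a.2 ≠ j₀), ⟨hFA hb, ?_, ?_, ?_, ?_⟩, ?_⟩
    · exact (filter_subset _ _).trans hFA
    · intro a haf
      exact (mem_filter.1 haf).2
    · intro j a' b' ha' hb'
      exact huniq (mem_filter.1 ha').1 (mem_filter.1 hb').1
    · intro i j hij hj
      obtain ⟨b', hb'⟩ := hcov hij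
      exact ⟨b', mem_filter.2 ⟨hb', hj⟩⟩
    · ext ⟨x, y⟩
      simp only [mem_insert, mem_filter, Prod.mk.injEq]
      constructor
      · rintro (⟨rfl, rfl⟩ | ⟨h1, -⟩)
        · exact hb
        · exact h1
      · intro hxy
        rcases eq_or_ne y j₀ with rfl | hy
        · exact Or.inl ⟨huniq hxy hb, rfl⟩
        · exact Or.inr ⟨hxy, hy⟩
  · rintro ⟨i, G, ⟨hiA, hbody⟩, rfl⟩
    obtain ⟨hGA, hnoj, huniqG, hcovG⟩ := hbody
    refine ⟨insert_subset hiA hGA, ?_, ?_⟩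
    · rintro j a b haj hbj
      rcases mem_insert.1 haj with ha1 | ha2 <;> rcases mem_insert.1 hbj with hb1 | hb2
      · simp only [Prod.mk.injEq] at ha1 hb1
        rw [ha1.1, hb1.1]
      · simp only [Prod.mk.injEq] at ha1
        exact absurd (ha1.2 ▸ hb2) (fun h => hnoj _ h rfl)
      · simp only [Prod.mk.injEq] at hb1
        exact absurd (hb1.2 ▸ ha2) (fun h => hnoj _ h rfl)
      · exact huniqG ha2 hb2
    · intro i' j hij
      rcases eq_or_ne j j₀ with rfl | hj
      · exact ⟨i, mem_insert_self _ _⟩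
      · obtain ⟨b, hb⟩ := hcovG hij hj
        exact ⟨b, mem_insert_of_mem hb⟩

private lemma insert_body_inj {j₀ i i' : V} {G G' : Finset (V × V)}
    (hG : ∀ a ∈ G, (a : V × V).2 ≠ j₀) (hG' : ∀ a ∈ G', (a : V × V).2 ≠ j₀)
    (h : insert (i, j₀) G = insert (i', j₀) G') : i = i' ∧ G = G' := by
  have key : ∀ (k k' : V) (H H' : Finset (V × V)),
      (∀ a ∈ H, (a : V × V).2 ≠ j₀) → (∀ a ∈ H', (a : V × V).2 ≠ j₀) →
      insert (k, j₀) H = insert (k', j₀) H' → H ⊆ H' := by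
    intro k k' H H' hH hH' he a haH
    have : a ∈ insert (k', j₀) H' := he ▸ mem_insert_of_mem haH
    rcases mem_insert.1 this with rfl | h3
    · exact absurd rfl (hH _ haH)
    · exact h3
  have hi : (i, j₀) ∈ insert (i', j₀) G' := h ▸ mem_insert_self _ _
  rcases mem_insert.1 hi with h1 | h2
  · simp only [Prod.mk.injEq] at h1
    exact ⟨h1.1, Subset.antisymm (key i i' G G' hG hG' h) (key i' i G' G hG' hG h.symm)⟩
  · exact absurd rfl (hG' _ h2)

private lemma transGen_of_reflTransGen_ne {r : V → V → Prop} {a b : V}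
    (h : Relation.ReflTransGen r a b) (hne : a ≠ b) : Relation.TransGen r a b := by
  rcases Relation.reflTransGen_iff_eq_or_transGen.1 h with rfl | h2
  · exact absurd rfl hne
  · exact h2

private lemma marg_insert_ne {A G : Finset (V × V)} (hGA : G ⊆ A)
    {j₀ iₖ : V}
    (hpred : ∀ i : V, (i, j₀) ∈ A → ¬ Relation.TransGen (Adj A) iₖ i)
    {i : V} (hiA : (i, j₀) ∈ A) (hik : i ≠ iₖ) (v : Finset V → ℝ) :
    marg v (insert (i, j₀) G) iₖ = marg v G iₖ := by
  have hni : ¬ Relation.ReflTransGen (Adj G) iₖ i := by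
    intro hr
    exact hpred i hiA
      (transGen_of_reflTransGen_ne (Relation.ReflTransGen.mono (fun x y hxy => hGA hxy) _ _ hr) (Ne.symm hik))
  have hsucc : succSet (insert (i, j₀) G) iₖ = succSet G iₖ :=
    succSet_insert (a := (i, j₀)) hni
  have himm : immSucc (insert (i, j₀) G) iₖ = immSucc G iₖ := by
    ext j
    simp only [immSucc, mem_filter, mem_univ, true_and, mem_insert, Prod.mk.injEq]
    constructor
    · rintro (⟨h1, rfl⟩ | h)
      · exact absurd h1.symm hik
      · exact h
    · exact fun h => Or.inr h
  have hchild : ∀ j ∈ immSucc G iₖ, succSet (insert (i, j₀) G) j = succSet G j := by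
    intro j hj
    simp only [immSucc, mem_filter, mem_univ, true_and] at hj
    refine succSet_insert (a := (i, j₀)) ?_
    intro hreach
    exact hpred i hiA
      (Relation.TransGen.head' (hGA hj) (Relation.ReflTransGen.mono (fun x y hxy => hGA hxy) _ _ hreach))
  rw [marg, marg, hsucc, himm]
  congr 1
  exact Finset.sum_congr rfl (fun j hj => by rw [hchild j hj])

private lemma marg_insert_self {A G : Finset (V × V)} (hA : CircuitFree A) (hGA : G ⊆ A)
    {j₀ iₖ : V} (hk : (iₖ, j₀) ∈ A)
    (hnoj : ∀ a ∈ G, (a : V × V).2 ≠ j₀)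
    (huniq : ∀ ⦃j a b : V⦄, (a, j) ∈ G → (b, j) ∈ G → a = b)
    (v : Finset V → ℝ) (hsa : Superadditive v) :
    marg v G iₖ ≤ marg v (insert (iₖ, j₀) G) iₖ := by
  have hkj : iₖ ≠ j₀ := by
    rintro rfl
    exact hA iₖ (Relation.TransGen.single hk)
  have hnj₀iₖ : ¬ Relation.ReflTransGen (Adj G) j₀ iₖ := by
    intro hr
    exact hA j₀ (Relation.TransGen.tail' (Relation.ReflTransGen.mono (fun x y hxy => hGA hxy) _ _ hr) hk)
  have hsucc_j₀ : succSet (insert (iₖ, j₀) G) j₀ = succSet G j₀ :=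
    succSet_insert (a := (iₖ, j₀)) hnj₀iₖ
  have hto : ∀ x, Relation.ReflTransGen (Adj (insert (iₖ, j₀) G)) iₖ x →
      Relation.ReflTransGen (Adj G) iₖ x ∨ Relation.ReflTransGen (Adj G) j₀ x := by
    intro x hx
    induction hx with
    | refl => exact Or.inl .refl
    | tail hy harc ih =>
      rcases mem_insert.1 harc with h1 | h2
      · simp only [Prod.mk.injEq] at h1
        refine Or.inr ?_
        rw [h1.2]
      · rcases ih with h3 | h3
        · exact Or.inl (h3.tail h2)
        · exact Or.inr (h3.tail h2)
  have hsplit : succSet (insert (iₖ, j₀) G) iₖ = succSet G iₖ ∪ succSet G j₀ := by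
    ext x
    simp only [succSet, mem_filter, mem_univ, true_and, mem_union]
    constructor
    · exact hto x
    · rintro (h | h)
      · exact Relation.ReflTransGen.mono (fun p q hpq => mem_insert_of_mem hpq) _ _ h
      · exact Relation.ReflTransGen.head (mem_insert_self _ _)
          (Relation.ReflTransGen.mono (fun p q hpq => mem_insert_of_mem hpq) _ _ h)
  have himm : immSucc (insert (iₖ, j₀) G) iₖ = insert j₀ (immSucc G iₖ) := by
    ext j
    simp only [immSucc, mem_filter, mem_univ, true_and, mem_insert, Prod.mk.injEq, true_and]
  have hj₀notin : j₀ ∉ immSucc G iₖ := by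
    simp only [immSucc, mem_filter, mem_univ, true_and]
    exact fun h => hnoj _ h rfl
  have hdisj : Disjoint (succSet G iₖ) (succSet G j₀) := by
    rw [Finset.disjoint_left]
    intro x hx1 hx2
    simp only [succSet, mem_filter, mem_univ, true_and] at hx1 hx2
    rcases ancestors_comparable huniq hx2 hx1 with h | h
    · rcases h.cases_tail with he | ⟨c, -, hc⟩
      · exact hkj he.symm
      · exact hnoj _ hc rfl
    · exact hA j₀ (Relation.TransGen.tail' (Relation.ReflTransGen.mono (fun p q hpq => hGA hpq) _ _ h) hk)
  have hchild : ∀ j ∈ immSucc G iₖ, succSet (insert (iₖ, j₀) G) j = succSet G j := by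
    intro j hj
    simp only [immSucc, mem_filter, mem_univ, true_and] at hj
    refine succSet_insert (a := (iₖ, j₀)) ?_
    intro hreach
    exact hA iₖ (Relation.TransGen.head' (hGA hj) (Relation.ReflTransGen.mono (fun x y hxy => hGA hxy) _ _ hreach))
  have hsum : ∑ j ∈ immSucc G iₖ, v (succSet (insert (iₖ, j₀) G) j)
      = ∑ j ∈ immSucc G iₖ, v (succSet G j) :=
    Finset.sum_congr rfl (fun j hj => by rw [hchild j hj])
  rw [marg, marg, hsplit, himm, Finset.sum_insert hj₀notin, hsucc_j₀, hsum]
  have hA2 := hsa (succSet G iₖ) (succSet G j₀) hdisj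
  linarith

end AFProofAux3

/-- direct competition reduction effect: if `(i₀, j₀)` is an arc with
`δ⁻(j₀) ≥ 2`, `iₖ ≠ i₀` is another immediate predecessor of `j₀` which is not a
predecessor of any immediate predecessor of `j₀`, and `v` is superadditive, then deleting
`(i₀, j₀)` does not decrease the AF value of `iₖ`. -/
theorem AF_direct_competition_reduction {V : Type*} [Fintype V] [DecidableEq V]
    (A : Finset (V × V)) (hA : CircuitFree A)
    (v : Finset V → ℝ) (hv0 : v ∅ = 0) (hsa : Superadditive v)
    (i₀ j₀ iₖ : V) (ha : (i₀, j₀) ∈ A) (hdeg : 2 ≤ inDeg A j₀)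
    (hk : (iₖ, j₀) ∈ A) (hne : iₖ ≠ i₀)
    (hpred : ∀ i : V, (i, j₀) ∈ A → ¬ Relation.TransGen (Adj A) iₖ i) :
    AF v A iₖ ≤ AF v (A.erase (i₀, j₀)) iₖ := by
  classical
  set A' := A.erase (i₀, j₀) with hA'def
  have hsub : A' ⊆ A := erase_subset _ _
  have hA'cf : CircuitFree A' := fun i hi => hA i (Relation.TransGen.mono (fun a b hab => hsub hab) _ _ hi)
  have hkA' : (iₖ, j₀) ∈ A' := mem_erase.2 ⟨fun he => hne (congrArg Prod.fst he), hk⟩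
  set P : Finset V := univ.filter (fun i => (i, j₀) ∈ A) with hPdef
  have hi₀P : i₀ ∈ P := mem_filter.2 ⟨mem_univ _, ha⟩
  have hiₖP : iₖ ∈ P := mem_filter.2 ⟨mem_univ _, hk⟩
  have hP' : univ.filter (fun i => (i, j₀) ∈ A') = P.erase i₀ := by
    ext i
    simp only [hPdef, mem_filter, mem_univ, true_and, mem_erase, hA'def]
    constructor
    · rintro ⟨h1, h2⟩
      exact ⟨fun he => h1 (by rw [he]), h2⟩
    · rintro ⟨h1, h2⟩
      exact ⟨fun he => h1 (congrArg Prod.fst he), h2⟩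
  set B := bodies A j₀ with hBdef
  have hBA' : bodies A' j₀ = B := bodies_erase
  have himgA : maxForests A = (P ×ˢ B).image (fun q => insert (q.1, j₀) q.2) :=
    maxForests_eq_image hA ⟨i₀, ha⟩
  have himgA' : maxForests A' = ((P.erase i₀) ×ˢ B).image (fun q => insert (q.1, j₀) q.2) := by
    rw [maxForests_eq_image hA'cf ⟨iₖ, hkA'⟩, hP', hBA']
  have hGprops : ∀ G ∈ B, IsBody A j₀ G := fun G hG => mem_bodies_iff.1 hG
  have hinj : ∀ (s : Finset V), ∀ x ∈ s ×ˢ B, ∀ y ∈ s ×ˢ B,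
      insert (x.1, j₀) x.2 = insert (y.1, j₀) y.2 → x = y := by
    intro s x hx y hy he
    rw [mem_product] at hx hy
    obtain ⟨he1, he2⟩ := insert_body_inj (hGprops _ hx.2).2.1 (hGprops _ hy.2).2.1 he
    exact Prod.ext he1 he2
  -- cardinalities
  have hcardA : (maxForests A).card = P.card * B.card := by
    rw [himgA, card_image_of_injOn (fun x hx y hy he => hinj P x hx y hy he), card_product]
  have hcardA' : (maxForests A').card = (P.erase i₀).card * B.card := by
    rw [himgA', card_image_of_injOn (fun x hx y hy he => hinj _ x hx y hy he), card_product]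
  -- sums
  set m : Finset (V × V) → ℝ := fun G => marg v G iₖ with hm
  set m' : Finset (V × V) → ℝ := fun G => marg v (insert (iₖ, j₀) G) iₖ with hm'
  have hinner : ∀ G ∈ B, ∀ (s : Finset V), iₖ ∈ s → s ⊆ P →
      ∑ i ∈ s, marg v (insert (i, j₀) G) iₖ = m' G + ((s.card : ℝ) - 1) * m G := by
    intro G hG s hks hsP
    obtain ⟨hGA, hnoj, huniq, hcov⟩ := hGprops G hG
    rw [← Finset.add_sum_erase _ _ hks]
    have hconst : ∀ i ∈ s.erase iₖ, marg v (insert (i, j₀) G) iₖ = m G := by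
      intro i hi
      have hiP : i ∈ P := hsP (mem_of_mem_erase hi)
      have hiA : (i, j₀) ∈ A := (mem_filter.1 hiP).2
      exact marg_insert_ne hGA hpred hiA (ne_of_mem_erase hi) v
    rw [Finset.sum_congr rfl hconst, Finset.sum_const, nsmul_eq_mul,
      card_erase_of_mem hks, Nat.cast_sub (card_pos.2 ⟨iₖ, hks⟩), Nat.cast_one]
  have hsumA : ∑ F ∈ maxForests A, marg v F iₖ
      = ∑ G ∈ B, (m' G + ((P.card : ℝ) - 1) * m G) := by
    rw [himgA, Finset.sum_image (hinj P), Finset.sum_product_right]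
    exact Finset.sum_congr rfl (fun G hG => hinner G hG P hiₖP (Finset.Subset.refl _))
  have hsumA' : ∑ F ∈ maxForests A', marg v F iₖ
      = ∑ G ∈ B, (m' G + (((P.erase i₀).card : ℝ) - 1) * m G) := by
    rw [himgA', Finset.sum_image (hinj _), Finset.sum_product_right]
    exact Finset.sum_congr rfl (fun G hG => hinner G hG (P.erase i₀)
      (mem_erase.2 ⟨hne, hiₖP⟩) (erase_subset _ _))
  -- numbers
  set d := P.card with hd
  set N := B.card with hN
  have hd2 : 2 ≤ d := by
    have hsubP : ({i₀, iₖ} : Finset V) ⊆ P := by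
      intro x hx
      rcases mem_insert.1 hx with rfl | hx
      · exact hi₀P
      · rw [mem_singleton.1 hx]; exact hiₖP
    have hc2 : ({i₀, iₖ} : Finset V).card = 2 := by
      rw [card_insert_of_notMem (by simp only [mem_singleton]; exact fun h => hne h.symm),
        card_singleton]
    calc 2 = ({i₀, iₖ} : Finset V).card := hc2.symm
      _ ≤ d := card_le_card hsubP
  have hN0 : 0 < N := card_pos.2 (bodies_nonempty A j₀)
  have herase_card : (P.erase i₀).card = d - 1 := card_erase_of_mem hi₀P
  have hs_le : ∑ G ∈ B, m G ≤ ∑ G ∈ B, m' G := by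
    refine Finset.sum_le_sum (fun G hG => ?_)
    obtain ⟨hGA, hnoj, huniq, hcov⟩ := hGprops G hG
    exact marg_insert_self hA hGA hk hnoj huniq v hsa
  set s1 : ℝ := ∑ G ∈ B, m G with hs1
  set s2 : ℝ := ∑ G ∈ B, m' G with hs2
  have hD2 : (2 : ℝ) ≤ (d : ℝ) := by exact_mod_cast hd2
  have hNN : (0 : ℝ) < (N : ℝ) := by exact_mod_cast hN0
  have hsplitsum : ∀ c : ℝ, ∑ G ∈ B, (m' G + c * m G) = s2 + c * s1 := by
    intro c
    rw [Finset.sum_add_distrib, ← Finset.mul_sum]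
  have heq1 : AF v A iₖ = (s2 + ((d : ℝ) - 1) * s1) / ((d : ℝ) * (N : ℝ)) := by
    rw [AF, hsumA, hcardA, hsplitsum]
    push_cast
    ring_nf
  have heq2 : AF v A' iₖ = (s2 + ((d : ℝ) - 2) * s1) / (((d : ℝ) - 1) * (N : ℝ)) := by
    rw [AF, hsumA', hcardA', hsplitsum, herase_card]
    have hc1 : ((d - 1 : ℕ) : ℝ) = (d : ℝ) - 1 := by
      rw [Nat.cast_sub (by omega), Nat.cast_one]
    rw [hc1]
    push_cast [Nat.cast_sub (show 1 ≤ d by omega)]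
    ring_nf
  rw [heq1, heq2]
  rw [div_le_div_iff₀ (by nlinarith) (by nlinarith)]
  nlinarith [mul_nonneg hNN.le (sub_nonneg.2 hs_le)]
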